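/- Monotonicity is restrictive for bounded memory states learning with finitely many states: [TxtBMS*MonEx] is a proper subset of [TxtBMS*Ex]. -/

import Mathlib

/-!
Common framework: learning languages (c.e. subsets of ℕ) in the limit from texts,
by partial computable learners; iterative learners and bounded memory states (BMS)
learners; the usual learning restrictions.
-/

namespace BMSLearning

/-- Input alphabet `Σ = ℕ ∪ {#}`; `none` plays the role of the pause symbol `#`. -/
abbrev Sig : Type := Option ℕ

/-- Output alphabet `Ω = ℕ ∪ {?}`; `none` plays the role of `?`. -/
abbrev Hyp : Type := Option ℕ

/-- A fixed acceptable programming system `φ`. -/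
noncomputable def phi (p : ℕ) : ℕ →. ℕ :=
  Nat.Partrec.Code.eval (Denumerable.ofNat Nat.Partrec.Code p)

/-- `W p` is the domain of the `p`-th partial computable function. -/
noncomputable def W (p : ℕ) : Set ℕ := {x | (phi p x).Dom}

/-- A learner is a partial (computable) function from finite sequences over `Σ` to `Ω`. -/
abbrev Learner : Type := List Sig →. Hyp

/-- `T[t]`: the initial segment of length `t` of the text `T`. -/
def seg (T : ℕ → Sig) (t : ℕ) : List Sig := (List.range t).map T

/-- The content of a finite sequence. -/
def cnt (σ : List Sig) : Set ℕ := {x | some x ∈ σ}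

/-- The content of an infinite sequence. -/
def cntT (T : ℕ → Sig) : Set ℕ := {x | ∃ t, T t = some x}

/-- `T` is a text for `L`. -/
def IsTextFor (T : ℕ → Sig) (L : Set ℕ) : Prop := cntT T = L

/-- The learner `M` outputs the (proper) hypothesis `e ∈ ℕ` at time `t` on text `T`. -/
def outputs (M : Learner) (T : ℕ → Sig) (t : ℕ) (e : ℕ) : Prop :=
  M (seg T t) = Part.some (some e)

/-- `M` Ex-learns `L` from the text `T`: the learning sequence is defined, and from
some point on, a correct hypothesis is output and never changed (except possibly to `?`). -/
def Ex (M : Learner) (L : Set ℕ) (T : ℕ → Sig) : Prop :=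
  (∀ t, (M (seg T t)).Dom) ∧
  ∃ t₀ e, outputs M T t₀ e ∧ W e = L ∧
    ∀ t, t₀ ≤ t → ∀ h : Hyp, M (seg T t) = Part.some h → h ≠ none → h = some e

/-- `M` Ex-converges on the text `T` (syntactic convergence, no correctness demanded). -/
def ExConverges (M : Learner) (T : ℕ → Sig) : Prop :=
  ∃ t₀ h₀, M (seg T t₀) = Part.some h₀ ∧
    ∀ t, t₀ ≤ t → ∀ h : Hyp, M (seg T t) = Part.some h → h ≠ none → h = h₀

/-- The iterated state function `s*` of a BMS learner with state transition function `sf`: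
`s*(ε) = 0` and `s*(σ⌢x) = sf(s*(σ), x)`. -/
def sStar (sf : ℕ × Sig →. ℕ) (σ : List Sig) : Part ℕ :=
  σ.foldl (fun q x => q.bind fun a => sf (a, x)) (Part.some 0)

/-- The learner determined by a hypothesis generating function `hf` and a state
transition function `sf`:  `M(ε) = ?` and `M(σ⌢x) = hf(s*(σ), x)`. -/
noncomputable def bmsLearner (hf : ℕ × Sig →. Hyp) (sf : ℕ × Sig →. ℕ) : Learner :=
  fun τ =>
    if hτ : τ = [] then Part.some (none : Hyp)
    else (sStar sf τ.dropLast).bind fun q => hf (q, τ.getLast hτ)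

/-- `(hf, sf)` is an admissible presentation of a BMS learner: both functions are
partial computable and they have equal domains. -/
def BMSPair (hf : ℕ × Sig →. Hyp) (sf : ℕ × Sig →. ℕ) : Prop :=
  Partrec hf ∧ Partrec sf ∧ ∀ p : ℕ × Sig, (hf p).Dom ↔ (sf p).Dom

/-- `BMS*`: the BMS learner with state transition function `sf` uses only finitely
many states on the text `T`. -/
def StatesFin (sf : ℕ × Sig →. ℕ) (T : ℕ → Sig) : Prop :=
  {q : ℕ | ∃ t, sStar sf (seg T t) = Part.some q}.Finite

/-- The iterative learner determined by the hypothesis generating function `hf`: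
`M(ε) = ?` and `M(σ⌢x) = hf(M(σ), x)`. -/
def itLearner (hf : Hyp × Sig →. Hyp) : Learner :=
  fun τ => τ.foldl (fun q x => q.bind fun a => hf (a, x)) (Part.some (none : Hyp))

/-- `[TxtBMS*δEx]`: the classes of languages Ex-learnable from texts under the
restriction `δ` by a BMS learner using finitely many states on each text
for a language of the class. -/
def TxtBMSstarEx (δ : Learner → (ℕ → Sig) → Prop) : Set (Set (Set ℕ)) :=
  {ℒ | ∃ hf sf, BMSPair hf sf ∧
      ∀ L ∈ ℒ, ∀ T, IsTextFor T L →
        Ex (bmsLearner hf sf) L T ∧ StatesFin sf T ∧ δ (bmsLearner hf sf) T}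

/-- `[ItTxtδEx]`: the classes of languages Ex-learnable from texts under the
restriction `δ` by an iterative learner. -/
def ItTxtEx (δ : Learner → (ℕ → Sig) → Prop) : Set (Set (Set ℕ)) :=
  {ℒ | ∃ hf, Partrec hf ∧
      ∀ L ∈ ℒ, ∀ T, IsTextFor T L → Ex (itLearner hf) L T ∧ δ (itLearner hf) T}

/-! ### Learning restrictions -/

/-- The trivial restriction `T`. -/
def Triv : Learner → (ℕ → Sig) → Prop := fun _ _ => True

/-- Conservative. -/
def Conv (M : Learner) (T : ℕ → Sig) : Prop :=
  ∀ s t, s ≤ t → ∀ es et : ℕ, outputs M T s es → outputs M T t et →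
    cnt (seg T t) ⊆ W es → es = et

/-- Decisive. -/
def Dec (M : Learner) (T : ℕ → Sig) : Prop :=
  ∀ r s t, r ≤ s → s ≤ t → ∀ er es et : ℕ,
    outputs M T r er → outputs M T s es → outputs M T t et →
    W er = W et → W er = W es

/-- Cautious. -/
def Caut (M : Learner) (T : ℕ → Sig) : Prop :=
  ∀ s t, s ≤ t → ∀ es et : ℕ, outputs M T s es → outputs M T t et →
    ¬ (W et ⊂ W es)

/-- Weakly monotonic. -/
def WMon (M : Learner) (T : ℕ → Sig) : Prop :=
  ∀ s t, s ≤ t → ∀ es et : ℕ, outputs M T s es → outputs M T t et →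
    cnt (seg T t) ⊆ W es → W es ⊆ W et

/-- Monotonic. -/
def Mon (M : Learner) (T : ℕ → Sig) : Prop :=
  ∀ s t, s ≤ t → ∀ es et : ℕ, outputs M T s es → outputs M T t et →
    W es ∩ cntT T ⊆ W et ∩ cntT T

/-- Strongly monotonic. -/
def SMon (M : Learner) (T : ℕ → Sig) : Prop :=
  ∀ s t, s ≤ t → ∀ es et : ℕ, outputs M T s es → outputs M T t et →
    W es ⊆ W et

/-- Non-U-shaped. -/
def NU (M : Learner) (T : ℕ → Sig) : Prop :=
  ∀ r s t, r ≤ s → s ≤ t → ∀ er es et : ℕ,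
    outputs M T r er → outputs M T s es → outputs M T t et →
    W er = cntT T → W et = cntT T → W er = W es

/-- Strongly non-U-shaped. -/
def SNU (M : Learner) (T : ℕ → Sig) : Prop :=
  ∀ r s t, r ≤ s → s ≤ t → ∀ er et : ℕ,
    outputs M T r er → outputs M T t et →
    W er = cntT T → W et = cntT T → M (seg T s) = Part.some (some er)

/-- Strongly decisive. -/
def SDec (M : Learner) (T : ℕ → Sig) : Prop :=
  ∀ r s t, r ≤ s → s ≤ t → ∀ er et : ℕ,
    outputs M T r er → outputs M T t et →
    W er = W et → M (seg T s) = Part.some (some er)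

/-- Witness-based. -/
def Wb (M : Learner) (T : ℕ → Sig) : Prop :=
  ∀ r s t, r < s → s ≤ t → ∀ er et : ℕ,
    outputs M T r er → outputs M T t et →
    M (seg T s) ≠ Part.some (some er) →
    (cnt (seg T s) ∩ (W et \ W er)).Nonempty

/-- A predicate on (learner, text) pairs allows for simulation on equivalent text. -/
def AFSOET (δ : Learner → (ℕ → Sig) → Prop) : Prop :=
  ∀ simu : ℕ → ℕ, Monotone simu → (∀ x, ∃ t, x ≤ simu t) →
    ∀ M M' : Learner, Partrec M → Partrec M' →
      ∀ T T' : ℕ → Sig,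
        (∀ t, cnt (seg T' t) = cnt (seg T (simu t))) →
        (∀ t, M' (seg T' t) = M (seg T (simu t))) →
        δ M T → δ M' T'

/-- The hypotheses (partial values in `Ω`) `h` and `h'` are semantically equal:
both undefined, both `?`, or both proper hypotheses describing the same language. -/
def SemEqAt (h h' : Part Hyp) : Prop :=
  (h.Dom ↔ h'.Dom) ∧ (h = Part.some (none : Hyp) ↔ h' = Part.some (none : Hyp)) ∧
  ∀ e e' : ℕ, h = Part.some (some e) → h' = Part.some (some e') → W e = W e'

/-- A restriction is semantic: it depends only on the text and the sequence of sets
described by the hypotheses. -/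
def Semantic (δ : Learner → (ℕ → Sig) → Prop) : Prop :=
  ∀ M M' : Learner, Partrec M → Partrec M' → ∀ T : ℕ → Sig,
    (∀ t, SemEqAt (M (seg T t)) (M' (seg T t))) → δ M T → δ M' T

/-- `σ` is a locking sequence for `M` on `L`. -/
def LockingSeq (M : Learner) (L : Set ℕ) (σ : List Sig) : Prop :=
  cnt σ ⊆ L ∧ (∃ e : ℕ, M σ = Part.some (some e) ∧ W e = L) ∧
    ∀ τ : List Sig, cnt τ ⊆ L → M (σ ++ τ) = M σ

/-- `M` is strongly locking on `L`. -/
def StronglyLocking (M : Learner) (L : Set ℕ) : Prop :=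
  ∀ T, IsTextFor T L → ∃ t, LockingSeq M L (seg T t)

/-- The fixed computable bijection `π : ℕ → Ω` with `π 0 = ?` and `π (i+1) = i`. -/
def piFun : ℕ → Hyp
  | 0 => none
  | (i + 1) => some i

/-- The inverse `π⁻¹ : Ω → ℕ` of `piFun`. -/
def piInv : Hyp → ℕ
  | none => 0
  | some e => e + 1

end BMSLearning

namespace BMSLearning

/-! ### The witness class -/

/-- The even numbers. -/
def SE : Set ℕ := {x | x % 2 = 0}

/-- `SL k = {0,2,...,2k} ∪ {2k+1}`. -/
def SL (k : ℕ) : Set ℕ := {x | (x % 2 = 0 ∧ x ≤ 2 * k) ∨ x = 2 * k + 1}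

/-- `SL2 k = {0,2,...,2k+2} ∪ {2k+1, 2k+3}`. -/
def SL2 (k : ℕ) : Set ℕ :=
  {x | (x % 2 = 0 ∧ x ≤ 2 * k + 2) ∨ x = 2 * k + 1 ∨ x = 2 * k + 3}

/-- The separating class. -/
def Cls : Set (Set ℕ) := {L | L = SE ∨ ∃ k, L = SL k ∨ L = SL2 k}

/-- Tagged membership predicate: tag `0` is `SE`, tag `3k+1` is `SL k`,
tag `3k+2` is `SL2 k`. -/
def PP (n x : ℕ) : Prop :=
  (n = 0 ∧ x % 2 = 0) ∨
  (n % 3 = 1 ∧ ((x % 2 = 0 ∧ x ≤ 2 * ((n - 1) / 3)) ∨ x = 2 * ((n - 1) / 3) + 1)) ∨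
  (n ≠ 0 ∧ n % 3 = 2 ∧
    ((x % 2 = 0 ∧ x ≤ 2 * ((n - 1) / 3) + 2) ∨
      x = 2 * ((n - 1) / 3) + 1 ∨ x = 2 * ((n - 1) / 3) + 3))

instance (n x : ℕ) : Decidable (PP n x) := by unfold PP; infer_instance

lemma primrecPred_PP : PrimrecPred (fun p : ℕ × ℕ => PP p.1 p.2) := by
  have h1 : Primrec (fun p : ℕ × ℕ => p.1) := Primrec.fst
  have h2 : Primrec (fun p : ℕ × ℕ => p.2) := Primrec.snd
  have hdiv : Primrec (fun p : ℕ × ℕ => (p.1 - 1) / 3) :=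
    Primrec.nat_div.comp (Primrec.nat_sub.comp h1 (Primrec.const 1)) (Primrec.const 3)
  have hmod2 : Primrec (fun p : ℕ × ℕ => p.2 % 2) :=
    Primrec.nat_mod.comp h2 (Primrec.const 2)
  have hmod3 : Primrec (fun p : ℕ × ℕ => p.1 % 3) :=
    Primrec.nat_mod.comp h1 (Primrec.const 3)
  unfold PP
  apply PrimrecPred.or
  · exact PrimrecPred.and (Primrec.eq.comp h1 (Primrec.const 0))
      (Primrec.eq.comp hmod2 (Primrec.const 0))
  apply PrimrecPred.or
  · apply PrimrecPred.and (Primrec.eq.comp hmod3 (Primrec.const 1))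
    apply PrimrecPred.or
    · exact PrimrecPred.and (Primrec.eq.comp hmod2 (Primrec.const 0))
        (Primrec.nat_le.comp h2 (Primrec.nat_mul.comp (Primrec.const 2) hdiv))
    · exact Primrec.eq.comp h2
        (Primrec.nat_add.comp (Primrec.nat_mul.comp (Primrec.const 2) hdiv) (Primrec.const 1))
  · apply PrimrecPred.and ((Primrec.eq.comp h1 (Primrec.const 0)).not)
    apply PrimrecPred.and (Primrec.eq.comp hmod3 (Primrec.const 2))
    apply PrimrecPred.or
    · exact PrimrecPred.and (Primrec.eq.comp hmod2 (Primrec.const 0))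
        (Primrec.nat_le.comp h2 (Primrec.nat_add.comp
          (Primrec.nat_mul.comp (Primrec.const 2) hdiv) (Primrec.const 2)))
    apply PrimrecPred.or
    · exact Primrec.eq.comp h2
        (Primrec.nat_add.comp (Primrec.nat_mul.comp (Primrec.const 2) hdiv) (Primrec.const 1))
    · exact Primrec.eq.comp h2
        (Primrec.nat_add.comp (Primrec.nat_mul.comp (Primrec.const 2) hdiv) (Primrec.const 3))

/-- There is a computable function giving, for each tag `n`, an index for
`{x | PP (n, x)}`. -/
lemma exists_idx : ∃ idx : ℕ → ℕ, Computable idx ∧ ∀ n, W (idx n) = {x | PP n x} := by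
  classical
  have hgo : Computable (fun m : ℕ => if PP m.unpair.1 m.unpair.2 then some 0 else (none : Option ℕ)) := by
    apply Primrec.to_comp
    exact Primrec.ite (primrecPred_PP.comp Primrec.unpair)
      (Primrec.const (some 0)) (Primrec.const none)
  have hg : Nat.Partrec fun m : ℕ =>
      ((if PP m.unpair.1 m.unpair.2 then some 0 else (none : Option ℕ) : Option ℕ) : Part ℕ) :=
    Partrec.nat_iff.1 (Computable.ofOption hgo)
  obtain ⟨c, hc⟩ := Nat.Partrec.Code.exists_code.1 hg
  obtain ⟨F, Fcomp, hF⟩ := Nat.Partrec.Code.smn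
  refine ⟨fun n => Encodable.encode (F c n),
    Computable.encode.comp (Fcomp.comp (Computable.const c) Computable.id), ?_⟩
  intro n
  ext x
  have h1 : phi (Encodable.encode (F c n)) x = Nat.Partrec.Code.eval (F c n) x := by
    unfold phi; rw [Denumerable.ofNat_encode]
  have h2 : Nat.Partrec.Code.eval (F c n) x =
      ((if PP (Nat.unpair (Nat.pair n x)).1 (Nat.unpair (Nat.pair n x)).2 then some 0 else (none : Option ℕ) : Option ℕ) :
        Part ℕ) := by
    rw [hF c n x, hc]
  simp only [W, Set.mem_setOf_eq, h1, h2, Nat.unpair_pair]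
  by_cases h : PP n x <;> simp [h]

end BMSLearning

namespace BMSLearning

/-! ### The BMS learner for the class -/

/-- Transition on an odd input `m` from state `q`. States: `0` = nothing seen;
`2a+1` = exactly one odd value `a` seen; `2a+2` = odd values `a` and `a+2` seen. -/
def oddTrans (q m : ℕ) : ℕ :=
  if q = 0 then 2 * m + 1
  else if q % 2 = 1 then
    (if m = (q - 1) / 2 + 2 then q + 1
     else if m + 2 = (q - 1) / 2 then 2 * m + 2
     else q)
  else q

/-- The full state transition. -/
def step (q : ℕ) : Sig → ℕ
  | none => q
  | some m => if m % 2 = 1 then oddTrans q m else q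

/-- The tag guessed in state `q`. -/
def tagOf (q : ℕ) : ℕ :=
  if q = 0 then 0
  else if q % 2 = 1 then 3 * (((q - 1) / 2 - 1) / 2) + 1
  else 3 * (((q - 2) / 2 - 1) / 2) + 2

lemma primrec_oddTrans : Primrec₂ oddTrans := by
  have h1 : Primrec (fun p : ℕ × ℕ => p.1) := Primrec.fst
  have h2 : Primrec (fun p : ℕ × ℕ => p.2) := Primrec.snd
  have hd : Primrec (fun p : ℕ × ℕ => (p.1 - 1) / 2) :=
    Primrec.nat_div.comp (Primrec.nat_sub.comp h1 (Primrec.const 1)) (Primrec.const 2)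
  unfold oddTrans
  apply Primrec.ite (Primrec.eq.comp h1 (Primrec.const 0))
  · exact Primrec.nat_add.comp (Primrec.nat_mul.comp (Primrec.const 2) h2) (Primrec.const 1)
  apply Primrec.ite (Primrec.eq.comp (Primrec.nat_mod.comp h1 (Primrec.const 2)) (Primrec.const 1))
  · apply Primrec.ite (Primrec.eq.comp h2 (Primrec.nat_add.comp hd (Primrec.const 2)))
    · exact Primrec.nat_add.comp h1 (Primrec.const 1)
    apply Primrec.ite (Primrec.eq.comp (Primrec.nat_add.comp h2 (Primrec.const 2)) hd)
    · exact Primrec.nat_add.comp (Primrec.nat_mul.comp (Primrec.const 2) h2) (Primrec.const 2)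
    · exact h1
  · exact h1

lemma primrec_step : Primrec (fun p : ℕ × Sig => step p.1 p.2) := by
  have hinner : Primrec₂ (fun (p : ℕ × Sig) (m : ℕ) =>
      if m % 2 = 1 then oddTrans p.1 m else p.1) := by
    apply Primrec.ite
      (Primrec.eq.comp (Primrec.nat_mod.comp Primrec.snd (Primrec.const 2)) (Primrec.const 1))
    · exact primrec_oddTrans.comp (Primrec.fst.comp Primrec.fst) Primrec.snd
    · exact Primrec.fst.comp Primrec.fst
  have := Primrec.option_casesOn (Primrec.snd : Primrec (fun p : ℕ × Sig => p.2))
    (Primrec.fst : Primrec (fun p : ℕ × Sig => p.1)) hinner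
  exact this.of_eq fun p => by cases hp : p.2 <;> simp [step]

lemma primrec_tagOf : Primrec tagOf := by
  have h1 : Primrec (fun q : ℕ => q) := Primrec.id
  unfold tagOf
  apply Primrec.ite (Primrec.eq.comp h1 (Primrec.const 0)) (Primrec.const 0)
  apply Primrec.ite (Primrec.eq.comp (Primrec.nat_mod.comp h1 (Primrec.const 2)) (Primrec.const 1))
  · exact Primrec.nat_add.comp
      (Primrec.nat_mul.comp (Primrec.const 3)
        (Primrec.nat_div.comp
          (Primrec.nat_sub.comp
            (Primrec.nat_div.comp (Primrec.nat_sub.comp h1 (Primrec.const 1)) (Primrec.const 2))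
            (Primrec.const 1))
          (Primrec.const 2)))
      (Primrec.const 1)
  · exact Primrec.nat_add.comp
      (Primrec.nat_mul.comp (Primrec.const 3)
        (Primrec.nat_div.comp
          (Primrec.nat_sub.comp
            (Primrec.nat_div.comp (Primrec.nat_sub.comp h1 (Primrec.const 2)) (Primrec.const 2))
            (Primrec.const 1))
          (Primrec.const 2)))
      (Primrec.const 2)

/-- The state transition function as a partial function. -/
def sfP : ℕ × Sig →. ℕ := fun p => Part.some (step p.1 p.2)

/-- The hypothesis function: output the index of the language guessed in the new state. -/
def hFun (idx : ℕ → ℕ) (p : ℕ × Sig) : Hyp := some (idx (tagOf (step p.1 p.2)))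

/-- The hypothesis function as a partial function. -/
def hfP (idx : ℕ → ℕ) : ℕ × Sig →. Hyp := fun p => Part.some (hFun idx p)

lemma bmsPair_hf_sf {idx : ℕ → ℕ} (hidx : Computable idx) : BMSPair (hfP idx) sfP := by
  refine ⟨?_, ?_, fun p => by simp [hfP, sfP]⟩
  · have : Computable (hFun idx) := by
      apply Computable.option_some.comp
      exact (hidx.comp ((primrec_tagOf.comp primrec_step).to_comp))
    exact this.partrec.of_eq fun p => rfl
  · have : Computable (fun p : ℕ × Sig => step p.1 p.2) := primrec_step.to_comp
    exact this.partrec.of_eq fun p => rfl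

/-! ### Behaviour of the learner on texts -/

/-- The state sequence along a text. -/
def st (T : ℕ → Sig) : ℕ → ℕ
  | 0 => 0
  | t + 1 => step (st T t) (T t)

lemma seg_zero (T : ℕ → Sig) : seg T 0 = [] := by simp [seg]

lemma seg_succ (T : ℕ → Sig) (t : ℕ) : seg T (t + 1) = seg T t ++ [T t] := by
  simp [seg, List.range_succ]

lemma sStar_seg (T : ℕ → Sig) (t : ℕ) : sStar sfP (seg T t) = Part.some (st T t) := by
  induction t with
  | zero => simp [seg_zero, sStar, st]
  | succ t ih =>
    have h : sStar sfP (seg T t ++ [T t]) =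
        (sStar sfP (seg T t)).bind fun a => sfP (a, T t) := by
      simp [sStar, List.foldl_append]
    rw [seg_succ, h, ih]
    simp [sfP, st]

lemma M_zero (idx : ℕ → ℕ) (T : ℕ → Sig) :
    bmsLearner (hfP idx) sfP (seg T 0) = Part.some none := by
  rw [seg_zero]; simp [bmsLearner]

lemma M_succ (idx : ℕ → ℕ) (T : ℕ → Sig) (t : ℕ) :
    bmsLearner (hfP idx) sfP (seg T (t + 1)) =
      Part.some (some (idx (tagOf (st T (t + 1))))) := by
  rw [seg_succ]
  have hne : seg T t ++ [T t] ≠ [] := by simp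
  rw [bmsLearner, dif_neg hne]
  rw [List.dropLast_concat, List.getLast_concat, sStar_seg]
  simp [hfP, hFun, st]

lemma M_dom (idx : ℕ → ℕ) (T : ℕ → Sig) (t : ℕ) :
    (bmsLearner (hfP idx) sfP (seg T t)).Dom := by
  cases t with
  | zero => rw [M_zero]; trivial
  | succ t => rw [M_succ]; trivial

/-- If the state stabilises to `q` and `W (idx (tagOf q)) = L`, then the learner
Ex-learns `L`. -/
lemma ex_of_stab (idx : ℕ → ℕ) (T : ℕ → Sig) (L : Set ℕ) (q t₀ : ℕ)
    (hW : W (idx (tagOf q)) = L) (hstab : ∀ t, t₀ ≤ t → st T t = q) :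
    Ex (bmsLearner (hfP idx) sfP) L T := by
  refine ⟨fun t => M_dom idx T t, t₀ + 1, idx (tagOf q), ?_, hW, ?_⟩
  · unfold outputs
    rw [M_succ, hstab (t₀ + 1) (Nat.le_succ t₀)]
  · intro t ht h hM _
    match t, ht with
    | t + 1, ht =>
      rw [M_succ] at hM
      have : h = some (idx (tagOf (st T (t + 1)))) := by
        exact (Part.some_inj.1 hM).symm
      rw [this, hstab (t + 1) (by omega)]

lemma statesFin_of (T : ℕ → Sig) (Q : Set ℕ) (hQ : Q.Finite)
    (h : ∀ t, st T t ∈ Q) : StatesFin sfP T := by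
  apply hQ.subset
  rintro q ⟨t, ht⟩
  rw [sStar_seg] at ht
  have := Part.some_inj.1 ht
  rw [← this]
  exact h t

end BMSLearning

namespace BMSLearning

/-! ### Step computations -/

lemma step_none (q : ℕ) : step q none = q := rfl

lemma step_even (q m : ℕ) (h : m % 2 = 0) : step q (some m) = q := by
  simp only [step]; rw [if_neg]; omega

lemma step_zero_odd (m : ℕ) (h : m % 2 = 1) : step 0 (some m) = 2 * m + 1 := by
  simp only [step, oddTrans]
  split_ifs <;> first | omega | (exfalso; assumption)

lemma step_one_self (a : ℕ) (h : a % 2 = 1) : step (2 * a + 1) (some a) = 2 * a + 1 := by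
  simp only [step, oddTrans]
  split_ifs <;> first | omega | (exfalso; assumption)

lemma step_one_up (a : ℕ) (h : a % 2 = 1) : step (2 * a + 1) (some (a + 2)) = 2 * a + 2 := by
  simp only [step, oddTrans]
  split_ifs <;> first | omega | (exfalso; assumption)

lemma step_one_down (a : ℕ) (h : a % 2 = 1) :
    step (2 * (a + 2) + 1) (some a) = 2 * a + 2 := by
  simp only [step, oddTrans]
  split_ifs <;> first | omega | (exfalso; assumption)

lemma step_two (a m : ℕ) : step (2 * a + 2) (some m) = 2 * a + 2 := by
  simp only [step, oddTrans]
  split_ifs <;> first | omega | (exfalso; assumption)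

/-! ### The guessed languages -/

lemma tagOf_zero : tagOf 0 = 0 := by simp [tagOf]

lemma tagOf_one (k : ℕ) : tagOf (2 * (2 * k + 1) + 1) = 3 * k + 1 := by
  unfold tagOf
  have e1 : (2 * (2 * k + 1) + 1 - 1) / 2 = 2 * k + 1 := by omega
  rw [if_neg (by omega), if_pos (by omega), e1]
  omega

lemma tagOf_two (k : ℕ) : tagOf (2 * (2 * k + 1) + 2) = 3 * k + 2 := by
  unfold tagOf
  have e1 : (2 * (2 * k + 1) + 2 - 2) / 2 = 2 * k + 1 := by omega
  rw [if_neg (by omega), if_neg (by omega), e1]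
  omega

lemma PP_zero : {x | PP 0 x} = SE := by
  ext x; simp [PP, SE]

lemma PP_one (k : ℕ) : {x | PP (3 * k + 1) x} = SL k := by
  ext x
  have e : ((3 * k + 1 : ℕ) - 1) / 3 = k := by omega
  simp only [PP, SL, Set.mem_setOf_eq, e]
  omega

lemma PP_two (k : ℕ) : {x | PP (3 * k + 2) x} = SL2 k := by
  ext x
  have e : ((3 * k + 2 : ℕ) - 1) / 3 = k := by omega
  simp only [PP, SL2, Set.mem_setOf_eq, e]
  omega

/-! ### Positive direction : the class is in [TxtBMS*Ex] -/

lemma text_mem {T : ℕ → Sig} {L : Set ℕ} (hT : IsTextFor T L) {t : ℕ} {m : ℕ}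
    (h : T t = some m) : m ∈ L := by
  rw [← hT]; exact ⟨t, h⟩

lemma text_of_mem {T : ℕ → Sig} {L : Set ℕ} (hT : IsTextFor T L) {m : ℕ} (h : m ∈ L) :
    ∃ t, T t = some m := by
  rw [← hT] at h; exact h

/-- On a text for `SE` the state is always `0`. -/
lemma st_SE {T : ℕ → Sig} (hT : IsTextFor T SE) (t : ℕ) : st T t = 0 := by
  induction t with
  | zero => rfl
  | succ t ih =>
    show step (st T t) (T t) = 0
    rw [ih]
    cases h : T t with
    | none => rfl
    | some m => exact step_even 0 m (text_mem hT h)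

lemma learn_SE (idx : ℕ → ℕ) (hidx : ∀ n, W (idx n) = {x | PP n x})
    {T : ℕ → Sig} (hT : IsTextFor T SE) :
    Ex (bmsLearner (hfP idx) sfP) SE T ∧ StatesFin sfP T := by
  constructor
  · apply ex_of_stab idx T SE 0 0
    · rw [tagOf_zero, hidx, PP_zero]
    · intro t _; exact st_SE hT t
  · exact statesFin_of T {0} (Set.finite_singleton 0) fun t => st_SE hT t

lemma learn_SL (idx : ℕ → ℕ) (hidx : ∀ n, W (idx n) = {x | PP n x})
    (k : ℕ) {T : ℕ → Sig} (hT : IsTextFor T (SL k)) :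
    Ex (bmsLearner (hfP idx) sfP) (SL k) T ∧ StatesFin sfP T := by
  set a := 2 * k + 1 with ha
  have haodd : a % 2 = 1 := by omega
  have hmem : a ∈ SL k := by simp [SL]; omega
  have hex : ∃ t, T t = some a := text_of_mem hT hmem
  classical
  set t₁ := Nat.find hex with ht₁
  have hT₁ : T t₁ = some a := Nat.find_spec hex
  have hmin : ∀ t < t₁, T t ≠ some a := fun t htl => Nat.find_min hex htl
  -- state before t₁
  have hbefore : ∀ t, t ≤ t₁ → st T t = 0 := by
    intro t
    induction t with
    | zero => intro _; rfl
    | succ t ih =>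
      intro htle
      show step (st T t) (T t) = 0
      rw [ih (by omega)]
      cases h : T t with
      | none => rfl
      | some m =>
        have hmL := text_mem hT h
        have : m % 2 = 0 := by
          rcases hmL with ⟨he, _⟩ | he
          · exact he
          · exact absurd (by rw [h, he]) (hmin t (by omega))
        exact step_even 0 m this
  -- state after t₁
  have hafter : ∀ t, t₁ < t → st T t = 2 * a + 1 := by
    intro t
    induction t with
    | zero => omega
    | succ t ih =>
      intro htl
      show step (st T t) (T t) = 2 * a + 1
      rcases Nat.lt_or_ge t₁ t with hc | hc
      · rw [ih hc]
        cases h : T t with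
        | none => rfl
        | some m =>
          have hmL := text_mem hT h
          rcases hmL with ⟨he, _⟩ | he
          · exact step_even _ m he
          · rw [he, ← ha]; exact step_one_self a haodd
      · have heq : t = t₁ := by omega
        rw [heq, hbefore t₁ (le_refl t₁), hT₁]
        exact step_zero_odd a haodd
  constructor
  · apply ex_of_stab idx T (SL k) (2 * a + 1) (t₁ + 1)
    · rw [ha, tagOf_one, hidx, PP_one]
    · intro t htle; exact hafter t (by omega)
  · apply statesFin_of T {0, 2 * a + 1} (by simp)
    intro t
    rcases le_or_gt t t₁ with h | h
    · rw [hbefore t h]; simp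
    · rw [hafter t h]; simp

/-- Learning `SL2 k`. -/
lemma learn_SL2 (idx : ℕ → ℕ) (hidx : ∀ n, W (idx n) = {x | PP n x})
    (k : ℕ) {T : ℕ → Sig} (hT : IsTextFor T (SL2 k)) :
    Ex (bmsLearner (hfP idx) sfP) (SL2 k) T ∧ StatesFin sfP T := by
  classical
  set a := 2 * k + 1 with ha
  have haodd : a % 2 = 1 := by omega
  have hex1 : ∃ t, T t = some a := text_of_mem hT (by right; left; omega)
  have hex2 : ∃ t, T t = some (a + 2) := text_of_mem hT (by right; right; omega)
  set t₁ := Nat.find hex1 with ht₁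
  set t₂ := Nat.find hex2 with ht₂
  have hT₁ : T t₁ = some a := Nat.find_spec hex1
  have hT₂ : T t₂ = some (a + 2) := Nat.find_spec hex2
  have hmin1 : ∀ t < t₁, T t ≠ some a := fun t htl => Nat.find_min hex1 htl
  have hmin2 : ∀ t < t₂, T t ≠ some (a + 2) := fun t htl => Nat.find_min hex2 htl
  have hne12 : t₁ ≠ t₂ := by
    intro h; rw [h, hT₂] at hT₁
    have := Option.some.inj hT₁; omega
  set F : ℕ → ℕ := fun t =>
    if t ≤ t₁ then (if t ≤ t₂ then 0 else 2 * (a + 2) + 1)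
    else (if t ≤ t₂ then 2 * a + 1 else 2 * a + 2) with hF
  have hstF : ∀ t, st T t = F t := by
    intro t
    induction t with
    | zero => simp only [hF]; rw [if_pos (by omega), if_pos (by omega)]; rfl
    | succ t ih =>
      show step (st T t) (T t) = F (t + 1)
      rw [ih]
      cases h : T t with
      | none =>
        rw [step_none]
        have h1 : t ≠ t₁ := by intro hc; rw [hc, hT₁] at h; simp at h
        have h2 : t ≠ t₂ := by intro hc; rw [hc, hT₂] at h; simp at h
        simp only [hF]; split_ifs <;> omega
      | some m =>
        have hmL := text_mem hT h
        have hcase : m % 2 = 0 ∨ m = a ∨ m = a + 2 := by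
          rcases hmL with ⟨he, _⟩ | he | he
          · left; exact he
          · right; left; omega
          · right; right; omega
        rcases hcase with he | he | he
        · rw [step_even _ m he]
          have h1 : t ≠ t₁ := by
            intro hc; rw [hc, hT₁] at h; have := Option.some.inj h; omega
          have h2 : t ≠ t₂ := by
            intro hc; rw [hc, hT₂] at h; have := Option.some.inj h; omega
          simp only [hF]; split_ifs <;> omega
        · -- m = a
          have h1 : t₁ ≤ t := by
            by_contra hc; exact hmin1 t (by omega) (by rw [h, he])
          have h2 : t ≠ t₂ := by
            intro hc; rw [hc, hT₂] at h; have := Option.some.inj h; omega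
          rw [he]
          rcases le_or_gt t t₂ with hle2 | hlt2
          · rcases lt_or_ge t₁ t with hlt | hge
            · have hFt : F t = 2 * a + 1 := by
                simp only [hF]; split_ifs <;> omega
              have hFt1 : F (t + 1) = 2 * a + 1 := by
                simp only [hF]; split_ifs <;> omega
              rw [hFt, hFt1]; exact step_one_self a haodd
            · have hFt : F t = 0 := by
                simp only [hF]; split_ifs <;> omega
              have hFt1 : F (t + 1) = 2 * a + 1 := by
                simp only [hF]; split_ifs <;> omega
              rw [hFt, hFt1]; exact step_zero_odd a haodd
          · rcases lt_or_ge t₁ t with hlt | hge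
            · have hFt : F t = 2 * a + 2 := by
                simp only [hF]; split_ifs <;> omega
              have hFt1 : F (t + 1) = 2 * a + 2 := by
                simp only [hF]; split_ifs <;> omega
              rw [hFt, hFt1]; exact step_two a _
            · have hFt : F t = 2 * (a + 2) + 1 := by
                simp only [hF]; split_ifs <;> omega
              have hFt1 : F (t + 1) = 2 * a + 2 := by
                simp only [hF]; split_ifs <;> omega
              rw [hFt, hFt1]; exact step_one_down a haodd
        · -- m = a + 2
          have h1 : t₂ ≤ t := by
            by_contra hc; exact hmin2 t (by omega) (by rw [h, he])
          have h2 : t ≠ t₁ := by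
            intro hc; rw [hc, hT₁] at h; have := Option.some.inj h; omega
          rw [he]
          rcases le_or_gt t t₁ with hle1 | hlt1
          · rcases lt_or_ge t₂ t with hlt | hge
            · have hFt : F t = 2 * (a + 2) + 1 := by
                simp only [hF]; split_ifs <;> omega
              have hFt1 : F (t + 1) = 2 * (a + 2) + 1 := by
                simp only [hF]; split_ifs <;> omega
              rw [hFt, hFt1]; exact step_one_self (a + 2) (by omega)
            · have hFt : F t = 0 := by
                simp only [hF]; split_ifs <;> omega
              have hFt1 : F (t + 1) = 2 * (a + 2) + 1 := by
                simp only [hF]; split_ifs <;> omega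
              rw [hFt, hFt1]; exact step_zero_odd (a + 2) (by omega)
          · rcases lt_or_ge t₂ t with hlt | hge
            · have hFt : F t = 2 * a + 2 := by
                simp only [hF]; split_ifs <;> omega
              have hFt1 : F (t + 1) = 2 * a + 2 := by
                simp only [hF]; split_ifs <;> omega
              rw [hFt, hFt1]; exact step_two a _
            · have hFt : F t = 2 * a + 1 := by
                simp only [hF]; split_ifs <;> omega
              have hFt1 : F (t + 1) = 2 * a + 2 := by
                simp only [hF]; split_ifs <;> omega
              rw [hFt, hFt1]; exact step_one_up a haodd
  constructor
  · apply ex_of_stab idx T (SL2 k) (2 * a + 2) (max t₁ t₂ + 1)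
    · rw [ha, tagOf_two, hidx, PP_two]
    · intro t htle
      rw [hstF t]
      simp only [hF]
      rw [if_neg (by omega), if_neg (by omega)]
  · apply statesFin_of T {0, 2 * a + 1, 2 * (a + 2) + 1, 2 * a + 2} (Set.toFinite _)
    intro t
    rw [hstF t]
    simp only [hF, Set.mem_insert_iff, Set.mem_singleton_iff]
    split_ifs <;> omega

/-- The class is learnable. -/
lemma cls_mem_triv : Cls ∈ TxtBMSstarEx Triv := by
  obtain ⟨idx, hcomp, hidx⟩ := exists_idx
  refine ⟨hfP idx, sfP, bmsPair_hf_sf hcomp, ?_⟩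
  intro L hL T hT
  rcases hL with rfl | ⟨k, rfl | rfl⟩
  · exact ⟨(learn_SE idx hidx hT).1, (learn_SE idx hidx hT).2, trivial⟩
  · exact ⟨(learn_SL idx hidx k hT).1, (learn_SL idx hidx k hT).2, trivial⟩
  · exact ⟨(learn_SL2 idx hidx k hT).1, (learn_SL2 idx hidx k hT).2, trivial⟩

end BMSLearning

namespace BMSLearning

/-! ### Negative direction : the class is not monotonically BMS*-learnable -/

/-- The canonical text for the even numbers. -/
def TE : ℕ → Sig := fun t => some (2 * t)

lemma TE_text : IsTextFor TE SE := by
  ext x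
  constructor
  · rintro ⟨t, ht⟩
    have := Option.some.inj ht
    show x % 2 = 0
    omega
  · intro hx
    exact ⟨x / 2, by show some _ = some x; congr 1; have : x % 2 = 0 := hx; omega⟩

/-- A cyclic enumeration of `SL k`. -/
def enumL (k j : ℕ) : Sig :=
  if j % (k + 2) ≤ k then some (2 * (j % (k + 2))) else some (2 * k + 1)

/-- A cyclic enumeration of `SL2 k`. -/
def enumL2 (k j : ℕ) : Sig :=
  if j % (k + 4) ≤ k + 1 then some (2 * (j % (k + 4)))
  else if j % (k + 4) = k + 2 then some (2 * k + 1) else some (2 * k + 3)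

/-- The text following `TE` for `k` steps and then enumerating `SL k`. -/
def T1 (k : ℕ) : ℕ → Sig := fun n => if n < k then TE n else enumL k (n - k)

lemma T1_text (k : ℕ) : IsTextFor (T1 k) (SL k) := by
  ext x
  constructor
  · rintro ⟨t, ht⟩
    unfold T1 at ht
    by_cases h : t < k
    · rw [if_pos h] at ht
      have := Option.some.inj ht
      show (x % 2 = 0 ∧ x ≤ 2 * k) ∨ x = 2 * k + 1
      omega
    · rw [if_neg h] at ht
      unfold enumL at ht
      have hj : (t - k) % (k + 2) < k + 2 := Nat.mod_lt _ (by omega)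
      by_cases h2 : (t - k) % (k + 2) ≤ k
      · rw [if_pos h2] at ht
        have := Option.some.inj ht
        show (x % 2 = 0 ∧ x ≤ 2 * k) ∨ x = 2 * k + 1
        omega
      · rw [if_neg h2] at ht
        have := Option.some.inj ht
        show (x % 2 = 0 ∧ x ≤ 2 * k) ∨ x = 2 * k + 1
        omega
  · intro hx
    rcases hx with ⟨he, hle⟩ | he
    · refine ⟨k + x / 2, ?_⟩
      unfold T1 enumL
      rw [if_neg (by omega)]
      have h1 : k + x / 2 - k = x / 2 := by omega
      have h2 : (x / 2) % (k + 2) = x / 2 := Nat.mod_eq_of_lt (by omega)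
      rw [h1, h2, if_pos (by omega)]
      congr 1
      omega
    · refine ⟨k + (k + 1), ?_⟩
      unfold T1 enumL
      rw [if_neg (by omega)]
      have h1 : k + (k + 1) - k = k + 1 := by omega
      have h2 : (k + 1) % (k + 2) = k + 1 := Nat.mod_eq_of_lt (by omega)
      rw [h1, h2, if_neg (by omega)]
      rw [he]

/-- The text following `T1 k` for `t₀` steps and then enumerating `SL2 k`. -/
def T2 (k t₀ : ℕ) : ℕ → Sig := fun n => if n < t₀ then T1 k n else enumL2 k (n - t₀)

lemma T2_text (k t₀ : ℕ) : IsTextFor (T2 k t₀) (SL2 k) := by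
  ext x
  constructor
  · rintro ⟨t, ht⟩
    unfold T2 at ht
    by_cases h : t < t₀
    · rw [if_pos h] at ht
      have hx : x ∈ SL k := by rw [← T1_text k]; exact ⟨t, ht⟩
      rcases hx with ⟨he, hle⟩ | he
      · show (x % 2 = 0 ∧ x ≤ 2 * k + 2) ∨ x = 2 * k + 1 ∨ x = 2 * k + 3
        omega
      · show (x % 2 = 0 ∧ x ≤ 2 * k + 2) ∨ x = 2 * k + 1 ∨ x = 2 * k + 3
        omega
    · rw [if_neg h] at ht
      unfold enumL2 at ht
      have hj : (t - t₀) % (k + 4) < k + 4 := Nat.mod_lt _ (by omega)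
      by_cases h2 : (t - t₀) % (k + 4) ≤ k + 1
      · rw [if_pos h2] at ht
        have := Option.some.inj ht
        show (x % 2 = 0 ∧ x ≤ 2 * k + 2) ∨ x = 2 * k + 1 ∨ x = 2 * k + 3
        omega
      · rw [if_neg h2] at ht
        by_cases h3 : (t - t₀) % (k + 4) = k + 2
        · rw [if_pos h3] at ht
          have := Option.some.inj ht
          show (x % 2 = 0 ∧ x ≤ 2 * k + 2) ∨ x = 2 * k + 1 ∨ x = 2 * k + 3
          omega
        · rw [if_neg h3] at ht
          have := Option.some.inj ht
          show (x % 2 = 0 ∧ x ≤ 2 * k + 2) ∨ x = 2 * k + 1 ∨ x = 2 * k + 3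
          omega
  · intro hx
    rcases hx with ⟨he, hle⟩ | he | he
    · refine ⟨t₀ + x / 2, ?_⟩
      unfold T2 enumL2
      rw [if_neg (by omega)]
      have h1 : t₀ + x / 2 - t₀ = x / 2 := by omega
      have h2 : (x / 2) % (k + 4) = x / 2 := Nat.mod_eq_of_lt (by omega)
      rw [h1, h2, if_pos (by omega)]
      congr 1
      omega
    · refine ⟨t₀ + (k + 2), ?_⟩
      unfold T2 enumL2
      rw [if_neg (by omega)]
      have h1 : t₀ + (k + 2) - t₀ = k + 2 := by omega
      have h2 : (k + 2) % (k + 4) = k + 2 := Nat.mod_eq_of_lt (by omega)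
      rw [h1, h2, if_neg (by omega), if_pos rfl, he]
    · refine ⟨t₀ + (k + 3), ?_⟩
      unfold T2 enumL2
      rw [if_neg (by omega)]
      have h1 : t₀ + (k + 3) - t₀ = k + 3 := by omega
      have h2 : (k + 3) % (k + 4) = k + 3 := Nat.mod_eq_of_lt (by omega)
      rw [h1, h2, if_neg (by omega), if_neg (by omega), he]

lemma seg_eq_of_agree {T T' : ℕ → Sig} {t : ℕ} (h : ∀ n < t, T n = T' n) :
    seg T t = seg T' t := by
  unfold seg
  apply List.map_congr_left
  intro n hn
  exact h n (List.mem_range.1 hn)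

lemma cls_not_mon : Cls ∉ TxtBMSstarEx Mon := by
  rintro ⟨hf, sf, hpair, H⟩
  set M := bmsLearner hf sf with hM
  -- learn SE on TE
  obtain ⟨hdomE, s, es, houts, hWes, hconvE⟩ := (H SE (Or.inl rfl) TE TE_text).1
  set k := s with hk
  -- learn SL k on T1 k
  obtain ⟨hdom1, t₀, e, houte, hWe, hconv1⟩ :=
    (H (SL k) (Or.inr ⟨k, Or.inl rfl⟩) (T1 k) (T1_text k)).1
  have hseg1 : seg (T1 k) s = seg TE s := by
    apply seg_eq_of_agree
    intro n hn
    unfold T1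
    rw [if_pos (by omega)]
  rcases le_or_gt s t₀ with hle | hlt
  · -- apply monotonicity on the text T2 k t₀ for SL2 k
    have hMon := (H (SL2 k) (Or.inr ⟨k, Or.inr rfl⟩) (T2 k t₀) (T2_text k t₀)).2.2
    have houts2 : outputs M (T2 k t₀) s es := by
      unfold outputs
      have : seg (T2 k t₀) s = seg TE s := by
        apply seg_eq_of_agree
        intro n hn
        unfold T2
        rw [if_pos (by omega)]
        unfold T1
        rw [if_pos (by omega)]
      rw [this]
      exact houts
    have houte2 : outputs M (T2 k t₀) t₀ e := by
      unfold outputs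
      have : seg (T2 k t₀) t₀ = seg (T1 k) t₀ := by
        apply seg_eq_of_agree
        intro n hn
        unfold T2
        rw [if_pos hn]
      rw [this]
      exact houte
    have hsub := hMon s t₀ hle es e houts2 houte2
    have hxmem : (2 * k + 2) ∈ W es ∩ cntT (T2 k t₀) := by
      constructor
      · rw [hWes]; show (2 * k + 2) % 2 = 0; omega
      · rw [T2_text k t₀]
        exact Or.inl ⟨by omega, by omega⟩
    have := hsub hxmem
    rw [hWe] at this
    rcases this.1 with ⟨_, hc⟩ | hc <;> omega
  · -- t₀ < s : the learner has converged on T1 k before time s, contradiction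
    have houts1 : M (seg (T1 k) s) = Part.some (some es) := by
      rw [hseg1]; exact houts
    have := hconv1 s (by omega) (some es) houts1 (by simp)
    have hese : es = e := by
      injection this with h1
    have hcontr : (2 * k + 1) ∈ SE := by
      rw [← hWes, hese, hWe]
      exact Or.inr rfl
    have : (2 * k + 1) % 2 = 0 := hcontr
    omega

end BMSLearning


namespace BMSLearning

/-- Monotonicity is restrictive for bounded memory states learning
with finitely many states: `[TxtBMS*MonEx] ⊊ [TxtBMS*Ex]`. -/
theorem txtBMSstar_Mon_ssubset : TxtBMSstarEx Mon ⊂ TxtBMSstarEx Triv := by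
  rw [Set.ssubset_def]
  constructor
  · rintro ℒ ⟨hf, sf, hp, h⟩
    exact ⟨hf, sf, hp, fun L hL T hT =>
      ⟨(h L hL T hT).1, (h L hL T hT).2.1, trivial⟩⟩
  · intro hcon
    exact cls_not_mon (hcon cls_mem_triv)

end BMSLearning
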